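/- arXiv:1706.01557 — 2 statements merged into one kernel-verified Lean document; each statement's English description precedes it below -/
import Mathlib

section
/- Let n, m, z be nonnegative integers with z ≤ m ≤ n-1, and let λ = [1^{u_1} 2^{u_2} ⋯ z^{u_z}] be a partition of z. The number of m-element subsets I of [n-1] of type λ (i.e., whose maximal runs of consecutive integers, listed with multiplicity, have lengths ℓ such that the multiset {ℓ - 1 : ℓ ≥ 2} equals λ) is the multinomial coefficient C(m-z; u_1, u_2, …, u_z, m-z-Σu_i) times C(n-m, m-z). More precisely, it equals ( (m-z)! / (u_1! u_2! ⋯ u_z! (m-z-ρ)!) ) · C(n-m, m-z), where ρ = Σ_i u_i, provided m ≥ z + ρ. -/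
/-- For a finite set `I` of naturals and `i : ℕ`, some translate `i + ℓ` is outside `I`. -/
theorem exists_gap (I : Finset ℕ) (i : ℕ) : ∃ ℓ : ℕ, i + ℓ ∉ I :=
  ⟨I.sup id + 1, fun h => by
    have := Finset.le_sup (f := id) h
    simp only [id] at this
    omega⟩

/-- The length of the run of consecutive elements of `I` starting at `i`:
the least `ℓ` with `i + ℓ ∉ I`. -/
def runLen (I : Finset ℕ) (i : ℕ) : ℕ := Nat.find (exists_gap I i)

open scoped Classical

open Finset

lemma mem_of_lt_runLen {I : Finset ℕ} {i t : ℕ} (h : t < runLen I i) : i + t ∈ I := by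
  have := Nat.find_min (exists_gap I i) h
  simpa using this

lemma runLen_add_notMem (I : Finset ℕ) (i : ℕ) : i + runLen I i ∉ I :=
  Nat.find_spec (exists_gap I i)

lemma runLen_pos {I : Finset ℕ} {i : ℕ} (h : i ∈ I) : 0 < runLen I i := by
  rcases Nat.eq_zero_or_pos (runLen I i) with h0 | h0
  · exfalso; have := runLen_add_notMem I i; rw [h0] at this; simp at this; exact this h
  · exact h0

lemma runLen_eq_iff {I : Finset ℕ} {i ℓ : ℕ} :
    runLen I i = ℓ ↔ (i + ℓ ∉ I ∧ ∀ t < ℓ, i + t ∈ I) := by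
  rw [runLen, Nat.find_eq_iff]
  constructor
  · rintro ⟨h1, h2⟩; exact ⟨h1, fun t ht => by have := h2 t ht; simpa using this⟩
  · rintro ⟨h1, h2⟩; exact ⟨h1, fun t ht => by simp [h2 t ht]⟩

/-- the starts of maximal runs of `I` -/
def starts (I : Finset ℕ) : Finset ℕ := I.filter (fun i => i - 1 ∉ I)

lemma run_subset {I : Finset ℕ} (s : ℕ) : Finset.Ico s (s + runLen I s) ⊆ I := by
  intro i hi
  rw [Finset.mem_Ico] at hi
  obtain ⟨h1, h2⟩ := hi
  have : i = s + (i - s) := by omega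
  rw [this]
  exact mem_of_lt_runLen (by omega)

lemma exists_start {I : Finset ℕ} (h0 : 0 ∉ I) :
    ∀ i ∈ I, ∃ s ∈ starts I, s ≤ i ∧ i < s + runLen I s := by
  intro i
  induction i using Nat.strong_induction_on with
  | _ i ih =>
    intro hi
    by_cases hprev : i - 1 ∉ I
    · refine ⟨i, by simp [starts, hi, hprev], le_refl _, ?_⟩
      have := runLen_pos hi; omega
    · push_neg at hprev
      have hipos : 0 < i := by
        rcases Nat.eq_zero_or_pos i with h | h
        · exact absurd (h ▸ hi) h0
        · exact h
      obtain ⟨s, hs, hsle, hslt⟩ := ih (i - 1) (by omega) hprev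
      refine ⟨s, hs, by omega, ?_⟩
      rcases Nat.lt_or_ge i (s + runLen I s) with h | h
      · exact h
      · exfalso
        have : i = s + runLen I s := by omega
        exact runLen_add_notMem I s (this ▸ hi)

lemma run_disjoint {I : Finset ℕ} {s s' : ℕ} (hs : s ∈ starts I) (hs' : s' ∈ starts I)
    (hne : s ≠ s') : Disjoint (Finset.Ico s (s + runLen I s)) (Finset.Ico s' (s' + runLen I s')) := by
  rw [Finset.disjoint_left]
  rintro i hi hi'
  rw [Finset.mem_Ico] at hi hi'
  -- wlog s < s'
  rcases Nat.lt_or_ge s s' with h | h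
  · have h1 : s' - 1 ∈ Finset.Ico s (s + runLen I s) := by rw [Finset.mem_Ico]; omega
    have := run_subset (I := I) s h1
    rw [starts, Finset.mem_filter] at hs'
    exact hs'.2 this
  · have hlt : s' < s := by omega
    have h1 : s - 1 ∈ Finset.Ico s' (s' + runLen I s') := by rw [Finset.mem_Ico]; omega
    have := run_subset (I := I) s' h1
    rw [starts, Finset.mem_filter] at hs
    exact hs.2 this

lemma eq_biUnion_runs {I : Finset ℕ} (h0 : 0 ∉ I) :
    I = (starts I).biUnion (fun s => Finset.Ico s (s + runLen I s)) := by
  apply Finset.Subset.antisymm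
  · intro i hi
    obtain ⟨s, hs, h1, h2⟩ := exists_start h0 i hi
    exact Finset.mem_biUnion.2 ⟨s, hs, Finset.mem_Ico.2 ⟨h1, h2⟩⟩
  · intro i hi
    obtain ⟨s, _, hmem⟩ := Finset.mem_biUnion.1 hi
    exact run_subset s hmem

lemma sum_runLen_eq_card {I : Finset ℕ} {A : Finset ℕ} (hA : A ⊆ starts I) :
    ∑ s ∈ A, runLen I s = (A.biUnion (fun s => Finset.Ico s (s + runLen I s))).card := by
  rw [Finset.card_biUnion]
  · simp [Nat.card_Ico]
  · intro s hs s' hs' hne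
    exact run_disjoint (hA hs) (hA hs') hne

lemma sum_runLen_le {I : Finset ℕ} {A : Finset ℕ} (hA : A ⊆ starts I) (B : Finset ℕ)
    (h : ∀ t ∈ A, Finset.Ico t (t + runLen I t) ⊆ B) :
    ∑ s ∈ A, runLen I s ≤ B.card := by
  rw [sum_runLen_eq_card hA]
  apply Finset.card_le_card
  intro i hi
  obtain ⟨s, hs, hmem⟩ := Finset.mem_biUnion.1 hi
  exact h s hs hmem

lemma card_eq_sum_runLen {I : Finset ℕ} (h0 : 0 ∉ I) :
    I.card = ∑ s ∈ starts I, runLen I s := by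
  rw [sum_runLen_eq_card (le_refl _), ← eq_biUnion_runs h0]

/-- sum of run lengths strictly before `s` -/
def preSum (I : Finset ℕ) (s : ℕ) : ℕ := ∑ t ∈ (starts I).filter (· < s), runLen I t

/-- the "gap position" of a start `s` -/
def sigmaMap (I : Finset ℕ) (s : ℕ) : ℕ := s - preSum I s

lemma run_not_cross {I : Finset ℕ} {t s' : ℕ} (hs' : s' ∈ starts I) (h : t < s') :
    t + runLen I t ≤ s' := by
  by_contra hc
  push_neg at hc
  have h1 : s' - 1 ∈ Finset.Ico t (t + runLen I t) := by rw [Finset.mem_Ico]; omega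
  have := run_subset (I := I) t h1
  rw [starts, Finset.mem_filter] at hs'
  exact hs'.2 this

lemma preSum_lt {I : Finset ℕ} (hone : ∀ i ∈ I, 1 ≤ i) {s : ℕ} (hs : s ∈ starts I) :
    preSum I s + 1 ≤ s := by
  have hs1 : 1 ≤ s := hone s (Finset.mem_filter.1 hs).1
  have hle : preSum I s ≤ (Finset.Ico 1 s).card := by
    apply sum_runLen_le (Finset.filter_subset _ _)
    intro t ht
    rw [Finset.mem_filter] at ht
    intro i hi
    rw [Finset.mem_Ico] at hi ⊢
    have h1 := hone i (run_subset t (Finset.mem_Ico.2 hi))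
    have h2 := run_not_cross hs ht.2
    omega
  rw [Nat.card_Ico] at hle
  omega

lemma preSum_split {I : Finset ℕ} {s s' : ℕ} (h : s < s') :
    preSum I s' = preSum I s + ∑ t ∈ (starts I).filter (fun t => s ≤ t ∧ t < s'), runLen I t := by
  rw [preSum, ← Finset.sum_filter_add_sum_filter_not ((starts I).filter (· < s')) (· < s)]
  congr 1
  · rw [Finset.filter_filter, preSum]
    congr 1
    apply Finset.filter_congr
    intro t _
    omega
  · rw [Finset.filter_filter]
    congr 1
    apply Finset.filter_congr
    intro t _
    omega

lemma sum_mid_le {I : Finset ℕ} {s s' : ℕ} (hs : s ∈ starts I) (hs' : s' ∈ starts I)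
    (h : s < s') :
    ∑ t ∈ (starts I).filter (fun t => s ≤ t ∧ t < s'), runLen I t ≤ s' - s - 1 := by
  have hsI : s ∈ I := (Finset.mem_filter.1 hs).1
  have hs'I : s' ∈ I := (Finset.mem_filter.1 hs').1
  have hcross : s + runLen I s ≤ s' := run_not_cross hs' h
  have hne : s + runLen I s ≠ s' := fun he => runLen_add_notMem I s (he ▸ hs'I)
  have hle : ∑ t ∈ (starts I).filter (fun t => s ≤ t ∧ t < s'), runLen I t
      ≤ ((Finset.Ico s s').erase (s + runLen I s)).card := by
    apply sum_runLen_le (Finset.filter_subset _ _)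
    intro t ht
    rw [Finset.mem_filter] at ht
    intro i hi
    have hiI := run_subset t hi
    rw [Finset.mem_Ico] at hi
    rw [Finset.mem_erase, Finset.mem_Ico]
    refine ⟨fun he => runLen_add_notMem I s (he ▸ hiI), by omega, ?_⟩
    have := run_not_cross hs' ht.2.2
    omega
  have hcard : ((Finset.Ico s s').erase (s + runLen I s)).card = s' - s - 1 := by
    rw [Finset.card_erase_of_mem (Finset.mem_Ico.2 ⟨by omega, by omega⟩), Nat.card_Ico]
  rw [hcard] at hle
  exact hle

lemma sigmaMap_lt {I : Finset ℕ} (hone : ∀ i ∈ I, 1 ≤ i) {s s' : ℕ}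
    (hs : s ∈ starts I) (hs' : s' ∈ starts I) (h : s < s') :
    sigmaMap I s < sigmaMap I s' := by
  have h1 := preSum_split (I := I) h
  have h2 := sum_mid_le hs hs' h
  have h3 := preSum_lt hone hs
  have h4 : 1 ≤ runLen I s := runLen_pos (Finset.mem_filter.1 hs).1
  have h5 : runLen I s ≤ ∑ t ∈ (starts I).filter (fun t => s ≤ t ∧ t < s'), runLen I t := by
    apply Finset.single_le_sum (f := fun t => runLen I t) (fun t _ => Nat.zero_le _)
    rw [Finset.mem_filter]
    exact ⟨hs, le_refl _, h⟩
  rw [sigmaMap, sigmaMap]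
  omega

lemma sigmaMap_pos {I : Finset ℕ} (hone : ∀ i ∈ I, 1 ≤ i) {s : ℕ} (hs : s ∈ starts I) :
    1 ≤ sigmaMap I s := by
  have := preSum_lt hone hs
  rw [sigmaMap]; omega

lemma sigmaMap_le {I : Finset ℕ} {n m : ℕ} (hsub : I ⊆ Finset.Icc 1 (n-1)) (hcard : I.card = m)
    {s : ℕ} (hs : s ∈ starts I) : sigmaMap I s ≤ n - m := by
  have hone : ∀ i ∈ I, 1 ≤ i := fun i hi => (Finset.mem_Icc.1 (hsub hi)).1
  have hsI : s ∈ I := (Finset.mem_filter.1 hs).1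
  have hs1 : 1 ≤ s := hone s hsI
  have hsn : s ≤ n - 1 := (Finset.mem_Icc.1 (hsub hsI)).2
  have hsplit : preSum I s + ∑ t ∈ (starts I).filter (fun t => ¬ t < s), runLen I t = m := by
    rw [preSum, Finset.sum_filter_add_sum_filter_not, ← card_eq_sum_runLen
      (fun h0 => by have := hone 0 h0; omega), hcard]
  have hge : ∑ t ∈ (starts I).filter (fun t => ¬ t < s), runLen I t ≤ (Finset.Icc s (n-1)).card := by
    apply sum_runLen_le (Finset.filter_subset _ _)
    intro t ht
    rw [Finset.mem_filter, not_lt] at ht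
    intro i hi
    have hiI := run_subset t hi
    rw [Finset.mem_Ico] at hi
    rw [Finset.mem_Icc]
    exact ⟨by omega, (Finset.mem_Icc.1 (hsub hiI)).2⟩
  rw [Nat.card_Icc] at hge
  have hn2 : 2 ≤ n := by omega
  rw [sigmaMap]
  have := preSum_lt hone hs
  omega

/-- start position of the run attached to gap element `x` -/
def stPos (G : Finset ℕ) (F : ℕ → ℕ) (x : ℕ) : ℕ := x + ∑ y ∈ G.filter (· < x), F y

/-- the subset built from gap set `G` and run lengths `F` -/
def build (G : Finset ℕ) (F : ℕ → ℕ) : Finset ℕ :=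
  G.biUnion (fun x => Finset.Ico (stPos G F x) (stPos G F x + F x))

lemma mem_build_iff {G : Finset ℕ} {F : ℕ → ℕ} {i : ℕ} :
    i ∈ build G F ↔ ∃ x ∈ G, stPos G F x ≤ i ∧ i < stPos G F x + F x := by
  simp [build, Finset.mem_biUnion, Finset.mem_Ico]

lemma stPos_gap {G : Finset ℕ} {F : ℕ → ℕ} {x x' : ℕ} (hx : x ∈ G)
    (h : x < x') : stPos G F x + F x + 1 ≤ stPos G F x' := by
  have hsplit : ∑ y ∈ G.filter (· < x'), F y
      = ∑ y ∈ G.filter (· < x), F y + ∑ y ∈ G.filter (fun y => x ≤ y ∧ y < x'), F y := by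
    rw [← Finset.sum_filter_add_sum_filter_not (G.filter (· < x')) (· < x)]
    congr 1
    · rw [Finset.filter_filter]; congr 1; apply Finset.filter_congr; intro t _; omega
    · rw [Finset.filter_filter]; congr 1; apply Finset.filter_congr; intro t _; omega
  have hFx : F x ≤ ∑ y ∈ G.filter (fun y => x ≤ y ∧ y < x'), F y := by
    apply Finset.single_le_sum (f := fun y => F y) (fun y _ => Nat.zero_le _)
    rw [Finset.mem_filter]; exact ⟨hx, le_refl _, h⟩
  rw [stPos, stPos, hsplit]
  omega

lemma stPos_strictMono {G : Finset ℕ} {F : ℕ → ℕ} {x x' : ℕ} (hx : x ∈ G)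
    (h : x < x') : stPos G F x < stPos G F x' := by
  have := stPos_gap (F := F) hx h; omega

lemma build_disjoint {G : Finset ℕ} {F : ℕ → ℕ} {x x' : ℕ} (hx : x ∈ G) (hx' : x' ∈ G)
    (hne : x ≠ x') :
    Disjoint (Finset.Ico (stPos G F x) (stPos G F x + F x))
      (Finset.Ico (stPos G F x') (stPos G F x' + F x')) := by
  rw [Finset.disjoint_left]
  rintro i hi hi'
  rw [Finset.mem_Ico] at hi hi'
  rcases Nat.lt_or_ge x x' with h | h
  · have := stPos_gap (F := F) hx h; omega
  · have hlt : x' < x := by omega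
    have := stPos_gap (F := F) hx' hlt; omega

lemma card_build {G : Finset ℕ} {F : ℕ → ℕ} : (build G F).card = ∑ x ∈ G, F x := by
  rw [build, Finset.card_biUnion]
  · simp [Nat.card_Ico]
  · intro x hx x' hx' hne
    exact build_disjoint hx hx' hne

lemma end_notMem_build {G : Finset ℕ} {F : ℕ → ℕ} {x : ℕ} (hx : x ∈ G) :
    stPos G F x + F x ∉ build G F := by
  rw [mem_build_iff]
  rintro ⟨x', hx', h1, h2⟩
  rcases lt_trichotomy x x' with h | h | h
  · have := stPos_gap (F := F) hx h; omega
  · subst h; omega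
  · have := stPos_gap (F := F) hx' h; omega

lemma pred_notMem_build {G : Finset ℕ} {F : ℕ → ℕ} (hG1 : ∀ x ∈ G, 1 ≤ x) {x : ℕ}
    (hx : x ∈ G) : stPos G F x - 1 ∉ build G F := by
  have hx1 : 1 ≤ stPos G F x := by have := hG1 x hx; rw [stPos]; omega
  rw [mem_build_iff]
  rintro ⟨x', hx', h1, h2⟩
  rcases lt_trichotomy x x' with h | h | h
  · have := stPos_gap (F := F) hx h; omega
  · subst h; omega
  · have := stPos_gap (F := F) hx' h; omega

lemma runLen_build {G : Finset ℕ} {F : ℕ → ℕ} {x : ℕ} (hx : x ∈ G) :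
    runLen (build G F) (stPos G F x) = F x := by
  rw [runLen_eq_iff]
  refine ⟨end_notMem_build hx, fun t ht => ?_⟩
  rw [mem_build_iff]
  exact ⟨x, hx, by omega, by omega⟩

lemma starts_build {G : Finset ℕ} {F : ℕ → ℕ} (hG1 : ∀ x ∈ G, 1 ≤ x)
    (hF1 : ∀ x ∈ G, 1 ≤ F x) :
    starts (build G F) = G.image (stPos G F) := by
  ext i
  rw [starts, Finset.mem_filter, Finset.mem_image]
  constructor
  · rintro ⟨hi, hprev⟩
    rw [mem_build_iff] at hi
    obtain ⟨x, hx, h1, h2⟩ := hi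
    refine ⟨x, hx, ?_⟩
    rcases Nat.eq_or_lt_of_le h1 with h | h
    · omega
    · exfalso
      apply hprev
      rw [mem_build_iff]
      exact ⟨x, hx, by omega, by omega⟩
  · rintro ⟨x, hx, rfl⟩
    refine ⟨?_, pred_notMem_build hG1 hx⟩
    rw [mem_build_iff]
    exact ⟨x, hx, le_refl _, by have := hF1 x hx; omega⟩

lemma build_subset {G : Finset ℕ} {F : ℕ → ℕ} {n m : ℕ}
    (hGsub : G ⊆ Finset.Icc 1 (n - m)) (hsum : ∑ x ∈ G, F x = m) (hmn : m ≤ n - 1) :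
    build G F ⊆ Finset.Icc 1 (n - 1) := by
  intro i hi
  rw [mem_build_iff] at hi
  obtain ⟨x, hx, h1, h2⟩ := hi
  obtain ⟨hx1, hx2⟩ := Finset.mem_Icc.1 (hGsub hx)
  have hins : G.filter (· ≤ x) = insert x (G.filter (· < x)) := by
    ext t
    rw [Finset.mem_insert, Finset.mem_filter, Finset.mem_filter]
    constructor
    · rintro ⟨ht, hle⟩
      rcases Nat.eq_or_lt_of_le hle with h | h
      · left; omega
      · right; exact ⟨ht, h⟩
    · rintro (rfl | ⟨ht, hlt⟩)
      · exact ⟨hx, le_refl _⟩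
      · exact ⟨ht, by omega⟩
  have hle : ∑ y ∈ G.filter (· ≤ x), F y ≤ m := by
    rw [← hsum]
    exact Finset.sum_le_sum_of_subset (Finset.filter_subset _ _)
  rw [hins, Finset.sum_insert (by rw [Finset.mem_filter]; omega)] at hle
  rw [stPos] at h1 h2
  rw [Finset.mem_Icc]
  omega

lemma sigmaMap_build {G : Finset ℕ} {F : ℕ → ℕ} (hG1 : ∀ x ∈ G, 1 ≤ x)
    (hF1 : ∀ x ∈ G, 1 ≤ F x) {x : ℕ} (hx : x ∈ G) :
    sigmaMap (build G F) (stPos G F x) = x := by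
  have hfilter : (starts (build G F)).filter (· < stPos G F x)
      = (G.filter (· < x)).image (stPos G F) := by
    rw [starts_build hG1 hF1]
    ext t
    rw [Finset.mem_filter, Finset.mem_image, Finset.mem_image]
    constructor
    · rintro ⟨⟨y, hy, rfl⟩, hlt⟩
      refine ⟨y, Finset.mem_filter.2 ⟨hy, ?_⟩, rfl⟩
      by_contra hc
      push_neg at hc
      rcases Nat.eq_or_lt_of_le hc with h | h
      · subst h; omega
      · have := stPos_strictMono (F := F) hx h; omega
    · rintro ⟨y, hy, rfl⟩
      rw [Finset.mem_filter] at hy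
      exact ⟨⟨y, hy.1, rfl⟩, stPos_strictMono (F := F) hy.1 hy.2⟩
  have hinj : ∀ a ∈ G.filter (· < x), ∀ b ∈ G.filter (· < x),
      stPos G F a = stPos G F b → a = b := by
    intro a ha b hb hab
    rw [Finset.mem_filter] at ha hb
    by_contra hne
    rcases Nat.lt_or_ge a b with h | h
    · have := stPos_strictMono (F := F) ha.1 h; omega
    · have h' : b < a := by omega
      have := stPos_strictMono (F := F) hb.1 h'; omega
  have hsum : preSum (build G F) (stPos G F x) = ∑ y ∈ G.filter (· < x), F y := by
    rw [preSum, hfilter, Finset.sum_image hinj]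
    apply Finset.sum_congr rfl
    intro y hy
    exact runLen_build (Finset.mem_filter.1 hy).1
  rw [sigmaMap, hsum, stPos]
  omega

/-- total version of a pi function -/
def totf (G : Finset ℕ) (f : ∀ a ∈ G, ℕ) : ℕ → ℕ := fun x => if h : x ∈ G then f x h else 0

lemma totf_mem {G : Finset ℕ} {f : ∀ a ∈ G, ℕ} {x : ℕ} (hx : x ∈ G) :
    totf G f x = f x hx := dif_pos hx

/-- restrict a pi function to a difference set -/
def restrictPi (S S₀ : Finset ℕ) (f : ∀ a ∈ S, ℕ) : ∀ a ∈ S \ S₀, ℕ :=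
  fun a ha => f a (Finset.mem_sdiff.1 ha).1

/-- combine: value `b` on `S₀`, `g` elsewhere -/
def combinePi (S S₀ : Finset ℕ) (b : ℕ) (g : ∀ a ∈ S \ S₀, ℕ) : ∀ a ∈ S, ℕ :=
  fun a ha => if h : a ∈ S₀ then b else g a (Finset.mem_sdiff.2 ⟨ha, h⟩)

lemma totf_restrict {S S₀ : Finset ℕ} {f : ∀ a ∈ S, ℕ} {a : ℕ} (ha : a ∈ S \ S₀) :
    totf (S \ S₀) (restrictPi S S₀ f) a = totf S f a := by
  rw [totf_mem ha, restrictPi, totf_mem (Finset.mem_sdiff.1 ha).1]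

lemma totf_combine {S S₀ : Finset ℕ} {b : ℕ} {g : ∀ a ∈ S \ S₀, ℕ} {a : ℕ} (ha : a ∈ S) :
    totf S (combinePi S S₀ b g) a = if a ∈ S₀ then b else totf (S \ S₀) g a := by
  rw [totf_mem ha, combinePi]
  by_cases h : a ∈ S₀
  · rw [dif_pos h, if_pos h]
  · rw [dif_neg h, if_neg h, totf_mem (Finset.mem_sdiff.2 ⟨ha, h⟩)]

lemma sigma_mk_eq {S : Finset ℕ} {A B : Finset ℕ} (h : A = B)
    (r : ∀ a ∈ S \ A, ℕ) (g : ∀ a ∈ S \ B, ℕ)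
    (hrg : ∀ a (ha : a ∈ S \ B), r a (by rw [h]; exact ha) = g a ha) :
    (⟨A, r⟩ : Σ S₀ : Finset ℕ, ∀ a ∈ S \ S₀, ℕ) = ⟨B, g⟩ := by
  subst h
  have : r = g := funext fun a => funext fun ha => hrg a ha
  rw [this]

lemma count_prescribed_fibers (v : ℕ → ℕ) (T : Finset ℕ) :
    ∀ S : Finset ℕ, (∑ b ∈ T, v b = S.card) →
    ((S.pi fun _ => T).filter
        (fun f => ∀ b ∈ T, (S.filter fun a => totf S f a = b).card = v b)).card
      * ∏ b ∈ T, (v b).factorial = (S.card).factorial := by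
  induction T using Finset.induction_on with
  | empty =>
    intro S hsum
    simp only [Finset.sum_empty] at hsum
    have hS : S = ∅ := Finset.card_eq_zero.1 hsum.symm
    subst hS
    rw [Finset.filter_true_of_mem (fun f _ => by simp), Finset.card_pi]
    simp
  | @insert b T' hb ih =>
    intro S hsum
    rw [Finset.sum_insert hb] at hsum
    have hvb : v b ≤ S.card := by omega
    have hcard : ((S.pi fun _ => insert b T').filter
        (fun f => ∀ b' ∈ insert b T', (S.filter fun a => totf S f a = b').card = v b')).card
      = ((S.powersetCard (v b)).sigma (fun S₀ =>
        (((S \ S₀).pi fun _ => T').filter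
          (fun g => ∀ b' ∈ T', ((S \ S₀).filter fun a => totf (S \ S₀) g a = b').card = v b')))).card := by
      apply Finset.card_bij'
        (i := fun f _ => (⟨S.filter fun a => totf S f a = b,
          restrictPi S (S.filter fun a => totf S f a = b) f⟩ : Σ S₀ : Finset ℕ, ∀ a ∈ S \ S₀, ℕ))
        (j := fun p _ => combinePi S p.1 b p.2)
      · -- i maps into sigma set
        intro f hf
        rw [Finset.mem_filter] at hf
        obtain ⟨hfpi, hfcond⟩ := hf
        rw [Finset.mem_pi] at hfpi
        rw [Finset.mem_sigma]
        refine ⟨Finset.mem_powersetCard.2 ⟨Finset.filter_subset _ _,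
          hfcond b (Finset.mem_insert_self _ _)⟩, ?_⟩
        rw [Finset.mem_filter]
        constructor
        · rw [Finset.mem_pi]
          intro a ha
          obtain ⟨haS, hanot⟩ := Finset.mem_sdiff.1 ha
          have hv := hfpi a haS
          rw [Finset.mem_insert] at hv
          simp only [restrictPi]
          rcases hv with h | h
          · exact absurd (Finset.mem_filter.2 ⟨haS, by rw [totf_mem haS]; exact h⟩) hanot
          · exact h
        · intro b' hb'
          have hbb' : b' ≠ b := fun h => hb (h ▸ hb')
          have hset : ((S \ (S.filter fun a => totf S f a = b)).filter
              (fun a => totf (S \ (S.filter fun a' => totf S f a' = b))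
                (restrictPi S (S.filter fun a' => totf S f a' = b) f) a = b'))
              = S.filter (fun a => totf S f a = b') := by
            ext a
            rw [Finset.mem_filter, Finset.mem_filter, Finset.mem_sdiff]
            constructor
            · rintro ⟨⟨haS, hanot⟩, hval⟩
              rw [totf_restrict (Finset.mem_sdiff.2 ⟨haS, hanot⟩)] at hval
              exact ⟨haS, hval⟩
            · rintro ⟨haS, hval⟩
              have hanot : a ∉ S.filter fun a' => totf S f a' = b := by
                rw [Finset.mem_filter]
                rintro ⟨_, hvb'⟩
                exact hbb' (hvb' ▸ hval).symm
              exact ⟨⟨haS, hanot⟩, by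
                rw [totf_restrict (Finset.mem_sdiff.2 ⟨haS, hanot⟩)]; exact hval⟩
          rw [hset]
          exact hfcond b' (Finset.mem_insert_of_mem hb')
      · -- j maps into big set
        rintro ⟨S₀, g⟩ hp
        simp only [Finset.mem_sigma, Finset.mem_powersetCard, Finset.mem_filter,
          Finset.mem_pi] at hp
        obtain ⟨⟨hS₀sub, hS₀card⟩, hgpi, hgcond⟩ := hp
        rw [Finset.mem_filter, Finset.mem_pi]
        constructor
        · intro a ha
          rw [combinePi]
          by_cases h : a ∈ S₀
          · rw [dif_pos h]; exact Finset.mem_insert_self _ _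
          · rw [dif_neg h]
            exact Finset.mem_insert_of_mem (hgpi a (Finset.mem_sdiff.2 ⟨ha, h⟩))
        · intro b' hb'
          rw [Finset.mem_insert] at hb'
          rcases hb' with rfl | hb'
          · have hset : (S.filter fun a => totf S (combinePi S S₀ b' g) a = b') = S₀ := by
              ext a
              rw [Finset.mem_filter]
              constructor
              · rintro ⟨haS, hv⟩
                rw [totf_combine haS] at hv
                by_contra h
                rw [if_neg h] at hv
                have hmem := hgpi a (Finset.mem_sdiff.2 ⟨haS, h⟩)
                rw [totf_mem (Finset.mem_sdiff.2 ⟨haS, h⟩)] at hv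
                rw [hv] at hmem
                exact hb hmem
              · intro h
                exact ⟨hS₀sub h, by rw [totf_combine (hS₀sub h), if_pos h]⟩
            rw [hset, hS₀card]
          · have hbb' : b' ≠ b := fun h => hb (h ▸ hb')
            have hset : (S.filter fun a => totf S (combinePi S S₀ b g) a = b')
                = ((S \ S₀).filter fun a => totf (S \ S₀) g a = b') := by
              ext a
              rw [Finset.mem_filter, Finset.mem_filter, Finset.mem_sdiff]
              constructor
              · rintro ⟨haS, hv⟩
                rw [totf_combine haS] at hv
                by_cases h : a ∈ S₀
                · rw [if_pos h] at hv; exact absurd hv.symm hbb'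
                · rw [if_neg h] at hv; exact ⟨⟨haS, h⟩, hv⟩
              · rintro ⟨⟨haS, h⟩, hv⟩
                exact ⟨haS, by rw [totf_combine haS, if_neg h]; exact hv⟩
            rw [hset]
            exact hgcond b' hb'
      · -- left inverse
        intro f hf
        rw [Finset.mem_filter, Finset.mem_pi] at hf
        obtain ⟨hfpi, hfcond⟩ := hf
        funext a ha
        rw [combinePi]
        by_cases h : a ∈ S.filter fun a' => totf S f a' = b
        · rw [dif_pos h]
          have := (Finset.mem_filter.1 h).2
          rw [totf_mem ha] at this
          exact this.symm
        · rw [dif_neg h]; rfl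
      · -- right inverse
        rintro ⟨S₀, g⟩ hp
        simp only [Finset.mem_sigma, Finset.mem_powersetCard, Finset.mem_filter,
          Finset.mem_pi] at hp
        obtain ⟨⟨hS₀sub, hS₀card⟩, hgpi, hgcond⟩ := hp
        have h1 : (S.filter fun a => totf S (combinePi S S₀ b g) a = b) = S₀ := by
          ext a
          rw [Finset.mem_filter]
          constructor
          · rintro ⟨haS, hv⟩
            rw [totf_combine haS] at hv
            by_contra h
            rw [if_neg h] at hv
            have hmem := hgpi a (Finset.mem_sdiff.2 ⟨haS, h⟩)
            rw [totf_mem (Finset.mem_sdiff.2 ⟨haS, h⟩)] at hv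
            rw [hv] at hmem
            exact hb hmem
          · intro h
            exact ⟨hS₀sub h, by rw [totf_combine (hS₀sub h), if_pos h]⟩
        apply sigma_mk_eq h1
        intro a ha
        rw [restrictPi, combinePi]
        rw [dif_neg (Finset.mem_sdiff.1 ha).2]
    rw [hcard, Finset.card_sigma, Finset.prod_insert hb]
    have hterm : ∀ S₀ ∈ S.powersetCard (v b),
        (((S \ S₀).pi fun _ => T').filter
          (fun g => ∀ b' ∈ T', ((S \ S₀).filter fun a => totf (S \ S₀) g a = b').card = v b')).card
          * ∏ b' ∈ T', (v b').factorial = (S.card - v b).factorial := by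
      intro S₀ hS₀
      rw [Finset.mem_powersetCard] at hS₀
      have hc : (S \ S₀).card = S.card - v b := by
        rw [Finset.card_sdiff_of_subset hS₀.1, hS₀.2]
      rw [← hc]
      exact ih (S \ S₀) (by rw [hc]; omega)
    calc (∑ S₀ ∈ S.powersetCard (v b), (((S \ S₀).pi fun _ => T').filter
          (fun g => ∀ b' ∈ T', ((S \ S₀).filter fun a => totf (S \ S₀) g a = b').card = v b')).card)
          * ((v b).factorial * ∏ b' ∈ T', (v b').factorial)
        = ∑ S₀ ∈ S.powersetCard (v b), ((((S \ S₀).pi fun _ => T').filter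
          (fun g => ∀ b' ∈ T', ((S \ S₀).filter fun a => totf (S \ S₀) g a = b').card = v b')).card
          * ∏ b' ∈ T', (v b').factorial) * (v b).factorial := by
          simp only [Finset.sum_mul]
          apply Finset.sum_congr rfl
          intro S₀ _
          ring
      _ = ∑ S₀ ∈ S.powersetCard (v b), (S.card - v b).factorial * (v b).factorial := by
          apply Finset.sum_congr rfl
          intro S₀ hS₀
          rw [hterm S₀ hS₀]
      _ = (S.card).choose (v b) * ((S.card - v b).factorial * (v b).factorial) := by
          rw [Finset.sum_const, Finset.card_powersetCard, smul_eq_mul]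
      _ = (S.card).choose (v b) * (v b).factorial * (S.card - v b).factorial := by ring
      _ = (S.card).factorial := Nat.choose_mul_factorial_mul_factorial hvb

lemma Icc_shift_sum (E : ℕ → ℕ) (z : ℕ) :
    ∑ b ∈ Finset.Icc 1 (z+1), E b = E 1 + ∑ j ∈ Finset.Icc 1 z, E (j+1) := by
  have h1 : Finset.Icc 1 (z+1) = insert 1 (Finset.Icc 2 (z+1)) := by
    ext t
    simp only [Finset.mem_Icc, Finset.mem_insert]
    omega
  have h2 : Finset.Icc 2 (z+1) = (Finset.Icc 1 z).map (addRightEmbedding 1) := by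
    rw [Finset.map_add_right_Icc]
  rw [h1, Finset.sum_insert (by simp [Finset.mem_Icc]), h2, Finset.sum_map]
  rfl

lemma Icc_shift_prod (E : ℕ → ℕ) (z : ℕ) :
    ∏ b ∈ Finset.Icc 1 (z+1), E b = E 1 * ∏ j ∈ Finset.Icc 1 z, E (j+1) := by
  have h1 : Finset.Icc 1 (z+1) = insert 1 (Finset.Icc 2 (z+1)) := by
    ext t
    simp only [Finset.mem_Icc, Finset.mem_insert]
    omega
  have h2 : Finset.Icc 2 (z+1) = (Finset.Icc 1 z).map (addRightEmbedding 1) := by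
    rw [Finset.map_add_right_Icc]
  rw [h1, Finset.prod_insert (by simp [Finset.mem_Icc]), h2, Finset.prod_map]
  rfl

section Main

variable {n m z ρ : ℕ} {u : ℕ → ℕ}

/-- counting the starts of a subset satisfying the run-type conditions -/
lemma starts_count {I : Finset ℕ}
    (hz : z = ∑ j ∈ Finset.Icc 1 z, j * u j) (hρ : ρ = ∑ j ∈ Finset.Icc 1 z, u j)
    (hu : ∀ j, z < j → u j = 0) (hm : z + ρ ≤ m)
    (h0 : 0 ∉ I) (hcard : I.card = m)
    (hcond : ∀ j, 1 ≤ j →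
      (I.filter (fun i => i - 1 ∉ I ∧ runLen I i = j + 1)).card = u j) :
    (starts I).card = m - z ∧
    ∀ b ∈ Finset.Icc 1 (z+1), ((starts I).filter (fun s => runLen I s = b)).card
      = (if b = 1 then m - z - ρ else u (b - 1)) := by
  have hA0 : ∀ j : ℕ, (I.filter fun i => i - 1 ∉ I ∧ runLen I i = j + 1)
      = (starts I).filter (fun s => runLen I s = j + 1) := by
    intro j
    rw [starts, Finset.filter_filter]
  have hfib : ∀ j, 1 ≤ j → ((starts I).filter (fun s => runLen I s = j + 1)).card = u j := by
    intro j hj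
    rw [← hA0]
    exact hcond j hj
  have hA1 : ∀ s ∈ starts I, runLen I s ∈ Finset.Icc 1 (z+1) := by
    intro s hs
    have hsI : s ∈ I := (Finset.mem_filter.1 hs).1
    have hpos := runLen_pos hsI
    rw [Finset.mem_Icc]
    refine ⟨hpos, ?_⟩
    by_contra hc
    push_neg at hc
    have hj1 : 1 ≤ runLen I s - 1 := by omega
    have := hfib (runLen I s - 1) hj1
    rw [hu (runLen I s - 1) (by omega)] at this
    rw [Finset.card_eq_zero] at this
    have hmem : s ∈ (starts I).filter (fun s' => runLen I s' = (runLen I s - 1) + 1) :=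
      Finset.mem_filter.2 ⟨hs, by omega⟩
    rw [this] at hmem
    exact absurd hmem (Finset.notMem_empty s)
  have hcardsum : (starts I).card
      = ∑ b ∈ Finset.Icc 1 (z+1), ((starts I).filter (fun s => runLen I s = b)).card :=
    Finset.card_eq_sum_card_fiberwise hA1
  have hmsum : m = ∑ b ∈ Finset.Icc 1 (z+1), b * ((starts I).filter (fun s => runLen I s = b)).card := by
    have h1 : m = ∑ s ∈ starts I, runLen I s := by
      rw [← hcard]; exact card_eq_sum_runLen h0
    have h2 : ∑ b ∈ Finset.Icc 1 (z+1), ∑ s ∈ (starts I).filter (fun s => runLen I s = b), runLen I s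
        = ∑ s ∈ starts I, runLen I s := Finset.sum_fiberwise_of_maps_to hA1 _
    rw [h1, ← h2]
    apply Finset.sum_congr rfl
    intro b _
    rw [Finset.sum_congr rfl (fun s hs => (Finset.mem_filter.1 hs).2), Finset.sum_const,
      smul_eq_mul, mul_comm]
  set X := ((starts I).filter (fun s => runLen I s = 1)).card with hX
  have hshift1 : ∑ b ∈ Finset.Icc 1 (z+1), ((starts I).filter (fun s => runLen I s = b)).card
      = X + ρ := by
    rw [Icc_shift_sum]
    congr 1
    rw [hρ]
    exact Finset.sum_congr rfl (fun j hj => hfib j (Finset.mem_Icc.1 hj).1)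
  have hshift2 : ∑ b ∈ Finset.Icc 1 (z+1), b * ((starts I).filter (fun s => runLen I s = b)).card
      = X + z + ρ := by
    rw [Icc_shift_sum]
    have : ∑ j ∈ Finset.Icc 1 z, (j+1) * ((starts I).filter (fun s => runLen I s = j+1)).card
        = ∑ j ∈ Finset.Icc 1 z, (j * u j + u j) := by
      apply Finset.sum_congr rfl
      intro j hj
      rw [hfib j (Finset.mem_Icc.1 hj).1]
      ring
    rw [this, Finset.sum_add_distrib, ← hz, ← hρ]
    omega
  have hXval : X = m - z - ρ ∧ (starts I).card = m - z := by
    rw [hshift1] at hcardsum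
    rw [hshift2] at hmsum
    omega
  refine ⟨hXval.2, ?_⟩
  intro b hb
  rw [Finset.mem_Icc] at hb
  by_cases h1 : b = 1
  · rw [if_pos h1, h1, ← hX, hXval.1]
  · rw [if_neg h1]
    have hb' : b = (b - 1) + 1 := by omega
    conv_lhs => rw [hb']
    rw [hfib (b-1) (by omega)]

end Main

lemma stPos_congr {G : Finset ℕ} {F F' : ℕ → ℕ} (h : ∀ y ∈ G, F y = F' y) (x : ℕ) :
    stPos G F x = stPos G F' x := by
  rw [stPos, stPos]
  congr 1
  exact Finset.sum_congr rfl (fun y hy => h y (Finset.mem_filter.1 hy).1)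

lemma build_congr {G : Finset ℕ} {F F' : ℕ → ℕ} (h : ∀ y ∈ G, F y = F' y) :
    build G F = build G F' := by
  rw [build, build]
  apply Finset.biUnion_congr rfl
  intro x hx
  rw [stPos_congr h, h x hx]

lemma stPos_injOn {G : Finset ℕ} {F : ℕ → ℕ} :
    ∀ x ∈ G, ∀ x' ∈ G, stPos G F x = stPos G F x' → x = x' := by
  intro x hx x' hx' he
  by_contra hne
  rcases Nat.lt_or_ge x x' with h | h
  · have := stPos_strictMono (F := F) hx h; omega
  · have h' : x' < x := by omega
    have := stPos_strictMono (F := F) hx' h'; omega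

lemma count_runs_build {G : Finset ℕ} {F : ℕ → ℕ} (hG1 : ∀ x ∈ G, 1 ≤ x)
    (hF1 : ∀ x ∈ G, 1 ≤ F x) (b : ℕ) :
    ((build G F).filter (fun i => i - 1 ∉ build G F ∧ runLen (build G F) i = b)).card
      = (G.filter fun x => F x = b).card := by
  have h1 : (build G F).filter (fun i => i - 1 ∉ build G F ∧ runLen (build G F) i = b)
      = (starts (build G F)).filter (fun s => runLen (build G F) s = b) := by
    rw [starts, Finset.filter_filter]
  have h2 : (starts (build G F)).filter (fun s => runLen (build G F) s = b)
      = (G.filter (fun x => F x = b)).image (stPos G F) := by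
    rw [starts_build hG1 hF1]
    ext i
    rw [Finset.mem_filter, Finset.mem_image, Finset.mem_image]
    constructor
    · rintro ⟨⟨x, hx, rfl⟩, hr⟩
      rw [runLen_build hx] at hr
      exact ⟨x, Finset.mem_filter.2 ⟨hx, hr⟩, rfl⟩
    · rintro ⟨x, hx, rfl⟩
      rw [Finset.mem_filter] at hx
      exact ⟨⟨x, hx.1, rfl⟩, by rw [runLen_build hx.1]; exact hx.2⟩
  rw [h1, h2]
  apply Finset.card_image_of_injOn
  intro x hx x' hx' he
  exact stPos_injOn x (Finset.mem_coe.1 (by exact_mod_cast (Finset.mem_filter.1 hx).1))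
    x' (Finset.mem_filter.1 hx').1 he

lemma image_sigmaMap_build {G : Finset ℕ} {F : ℕ → ℕ} (hG1 : ∀ x ∈ G, 1 ≤ x)
    (hF1 : ∀ x ∈ G, 1 ≤ F x) :
    (starts (build G F)).image (sigmaMap (build G F)) = G := by
  rw [starts_build hG1 hF1, Finset.image_image]
  ext a
  rw [Finset.mem_image]
  constructor
  · rintro ⟨y, hy, hv⟩
    simp only [Function.comp] at hv
    rw [sigmaMap_build hG1 hF1 hy] at hv
    exact hv ▸ hy
  · intro ha
    exact ⟨a, ha, by simp only [Function.comp]; exact sigmaMap_build hG1 hF1 ha⟩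

section Main2

variable {n m z ρ : ℕ} {u : ℕ → ℕ}

lemma runLen_mem_Icc {I : Finset ℕ} (hu : ∀ j, z < j → u j = 0)
    (hcond : ∀ j, 1 ≤ j →
      (I.filter (fun i => i - 1 ∉ I ∧ runLen I i = j + 1)).card = u j) :
    ∀ s ∈ starts I, runLen I s ∈ Finset.Icc 1 (z+1) := by
  have hA0 : ∀ j : ℕ, (I.filter fun i => i - 1 ∉ I ∧ runLen I i = j + 1)
      = (starts I).filter (fun s => runLen I s = j + 1) := by
    intro j; rw [starts, Finset.filter_filter]
  intro s hs
  have hsI : s ∈ I := (Finset.mem_filter.1 hs).1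
  have hpos := runLen_pos hsI
  rw [Finset.mem_Icc]
  refine ⟨hpos, ?_⟩
  by_contra hc
  push_neg at hc
  have hj1 : 1 ≤ runLen I s - 1 := by omega
  have hcnt := hcond (runLen I s - 1) hj1
  rw [hA0, hu (runLen I s - 1) (by omega), Finset.card_eq_zero] at hcnt
  have hmem : s ∈ (starts I).filter (fun s' => runLen I s' = (runLen I s - 1) + 1) :=
    Finset.mem_filter.2 ⟨hs, by omega⟩
  rw [hcnt] at hmem
  exact absurd hmem (Finset.notMem_empty s)

lemma sum_F_of_fibers {G : Finset ℕ} {F : ℕ → ℕ}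
    (hz : z = ∑ j ∈ Finset.Icc 1 z, j * u j) (hρ : ρ = ∑ j ∈ Finset.Icc 1 z, u j)
    (hm : z + ρ ≤ m) (hGcard : G.card = m - z) (hzm : z ≤ m)
    (hFrange : ∀ x ∈ G, F x ∈ Finset.Icc 1 (z+1))
    (hfib : ∀ b ∈ Finset.Icc 1 (z+1), (G.filter fun a => F a = b).card
      = (if b = 1 then m - z - ρ else u (b - 1))) :
    ∑ x ∈ G, F x = m := by
  have h1 : ∑ b ∈ Finset.Icc 1 (z+1), ∑ x ∈ G.filter (fun x => F x = b), F x = ∑ x ∈ G, F x :=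
    Finset.sum_fiberwise_of_maps_to hFrange _
  have h2 : ∀ b, ∑ x ∈ G.filter (fun x => F x = b), F x = b * (G.filter (fun x => F x = b)).card := by
    intro b
    rw [Finset.sum_congr rfl (fun x hx => (Finset.mem_filter.1 hx).2), Finset.sum_const,
      smul_eq_mul, mul_comm]
  rw [← h1, Finset.sum_congr rfl (fun b _ => h2 b)]
  rw [Finset.sum_congr rfl (fun b hb => by rw [hfib b hb])]
  rw [Icc_shift_sum (fun b => b * (if b = 1 then m - z - ρ else u (b - 1)))]
  rw [if_pos rfl, one_mul]
  have h3 : ∑ j ∈ Finset.Icc 1 z, (j+1) * (if j + 1 = 1 then m - z - ρ else u (j + 1 - 1))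
      = ∑ j ∈ Finset.Icc 1 z, (j * u j + u j) := by
    apply Finset.sum_congr rfl
    intro j hj
    have hj' := Finset.mem_Icc.1 hj
    rw [if_neg (by omega), Nat.add_sub_cancel]
    ring
  rw [h3, Finset.sum_add_distrib, ← hz, ← hρ]
  omega

end Main2

/-- The number of `m`-element subsets of `{1,…,n-1}` of type
`λ = [1^{u 1} 2^{u 2} ⋯ z^{u z}]` (a partition of `z` with `ρ` parts), i.e. subsets
having exactly `u j` maximal runs of consecutive elements of length `j + 1` for each
`j ≥ 1`, equals the multinomial coefficient `(m-z)! / (u₁! ⋯ u_z! (m-z-ρ)!)` times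
`C(n-m, m-z)`.  (Stated multiplied through by the denominators.) -/
theorem count_subsets_of_type (n m z ρ : ℕ) (u : ℕ → ℕ)
    (hρ : ρ = ∑ j ∈ Finset.Icc 1 z, u j)
    (hz : z = ∑ j ∈ Finset.Icc 1 z, j * u j)
    (hu : ∀ j, z < j → u j = 0)
    (hm : z + ρ ≤ m) (hmn : m ≤ n - 1) :
    (((Finset.Icc 1 (n - 1)).powerset.filter (fun I : Finset ℕ =>
        I.card = m ∧ ∀ j, 1 ≤ j →
          (I.filter (fun i => i - 1 ∉ I ∧ runLen I i = j + 1)).card = u j)).card)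
      * (∏ j ∈ Finset.Icc 1 z, (u j).factorial) * (m - z - ρ).factorial
    = (m - z).factorial * Nat.choose (n - m) (m - z) := by
  set vfun : ℕ → ℕ := fun b => if b = 1 then m - z - ρ else u (b - 1) with hvfun
  set Iset := ((Finset.Icc 1 (n - 1)).powerset.filter (fun I : Finset ℕ =>
        I.card = m ∧ ∀ j, 1 ≤ j →
          (I.filter (fun i => i - 1 ∉ I ∧ runLen I i = j + 1)).card = u j)) with hIset
  set Pairs := ((Finset.Icc 1 (n - m)).powersetCard (m - z)).sigma (fun G =>
      ((G.pi fun _ => Finset.Icc 1 (z+1)).filter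
        (fun f => ∀ b ∈ Finset.Icc 1 (z+1),
          (G.filter fun a => totf G f a = b).card = vfun b))) with hPairsDef
  have hzm : z ≤ m := by omega
  -- the bijection
  have hbij : Pairs.card = Iset.card := by
    apply Finset.card_bij (i := fun p _ => build p.1 (totf p.1 p.2))
    · -- maps to
      rintro ⟨G, f⟩ hp
      simp only [hPairsDef, Finset.mem_sigma, Finset.mem_powersetCard, Finset.mem_filter,
        Finset.mem_pi] at hp
      obtain ⟨⟨hGsub, hGcard⟩, hfpi, hfib⟩ := hp
      have hG1 : ∀ x ∈ G, 1 ≤ x := fun x hx => (Finset.mem_Icc.1 (hGsub hx)).1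
      have hFrange : ∀ x ∈ G, totf G f x ∈ Finset.Icc 1 (z+1) := by
        intro x hx
        rw [totf_mem hx]
        exact hfpi x hx
      have hF1 : ∀ x ∈ G, 1 ≤ totf G f x := fun x hx => (Finset.mem_Icc.1 (hFrange x hx)).1
      have hFsum : ∑ x ∈ G, totf G f x = m :=
        sum_F_of_fibers hz hρ hm hGcard hzm hFrange hfib
      rw [hIset, Finset.mem_filter, Finset.mem_powerset]
      refine ⟨build_subset hGsub hFsum hmn, by rw [card_build, hFsum], ?_⟩
      intro j hj
      rw [count_runs_build hG1 hF1]
      by_cases hjz : j ≤ z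
      · have := hfib (j+1) (Finset.mem_Icc.2 ⟨by omega, by omega⟩)
        rw [this, hvfun]
        simp only []
        rw [if_neg (by omega), Nat.add_sub_cancel]
      · have hempty : G.filter (fun x => totf G f x = j + 1) = ∅ := by
          rw [Finset.filter_eq_empty_iff]
          intro x hx
          have := (Finset.mem_Icc.1 (hFrange x hx)).2
          omega
        rw [hempty, Finset.card_empty, hu j (by omega)]
    · -- injective
      rintro ⟨G, f⟩ hp ⟨G', f'⟩ hp' heq
      simp only [hPairsDef, Finset.mem_sigma, Finset.mem_powersetCard, Finset.mem_filter,
        Finset.mem_pi] at hp hp'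
      obtain ⟨⟨hGsub, hGcard⟩, hfpi, hfib⟩ := hp
      obtain ⟨⟨hGsub', hGcard'⟩, hfpi', hfib'⟩ := hp'
      have hG1 : ∀ x ∈ G, 1 ≤ x := fun x hx => (Finset.mem_Icc.1 (hGsub hx)).1
      have hG1' : ∀ x ∈ G', 1 ≤ x := fun x hx => (Finset.mem_Icc.1 (hGsub' hx)).1
      have hF1 : ∀ x ∈ G, 1 ≤ totf G f x := by
        intro x hx
        rw [totf_mem hx]
        exact (Finset.mem_Icc.1 (hfpi x hx)).1
      have hF1' : ∀ x ∈ G', 1 ≤ totf G' f' x := by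
        intro x hx
        rw [totf_mem hx]
        exact (Finset.mem_Icc.1 (hfpi' x hx)).1
      have hIeq : build G (totf G f) = build G' (totf G' f') := heq
      have hGG' : G = G' := by
        rw [← image_sigmaMap_build hG1 hF1, hIeq, image_sigmaMap_build hG1' hF1']
      subst hGG'
      have hFF' : ∀ x, x ∈ G → totf G f x = totf G f' x := by
        intro x
        induction x using Nat.strong_induction_on with
        | _ x ih =>
          intro hx
          have hst : stPos G (totf G f) x = stPos G (totf G f') x := by
            rw [stPos, stPos]
            congr 1
            apply Finset.sum_congr rfl
            intro y hy
            rw [Finset.mem_filter] at hy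
            exact ih y hy.2 hy.1
          have e1 : runLen (build G (totf G f)) (stPos G (totf G f) x) = totf G f x :=
            runLen_build hx
          have e2 : runLen (build G (totf G f')) (stPos G (totf G f') x) = totf G f' x :=
            runLen_build hx
          rw [hIeq, hst] at e1
          rw [← e1, ← e2]
      have hff' : f = f' := by
        funext a ha
        have := hFF' a ha
        rw [totf_mem ha, totf_mem ha] at this
        exact this
      rw [hff']
    · -- surjective
      intro I hI
      rw [hIset, Finset.mem_filter, Finset.mem_powerset] at hI
      obtain ⟨hsub, hcard, hcond⟩ := hI
      have hone : ∀ i ∈ I, 1 ≤ i := fun i hi => (Finset.mem_Icc.1 (hsub hi)).1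
      have h0 : 0 ∉ I := fun h => by have := hone 0 h; omega
      obtain ⟨hstc, hstfib⟩ := starts_count hz hρ hu hm h0 hcard hcond
      have hrmem := runLen_mem_Icc hu hcond
      have hinj : ∀ s ∈ starts I, ∀ s' ∈ starts I, sigmaMap I s = sigmaMap I s' → s = s' := by
        intro s hs s' hs' he
        by_contra hne
        rcases Nat.lt_or_ge s s' with h | h
        · have := sigmaMap_lt hone hs hs' h; omega
        · have h' : s' < s := by omega
          have := sigmaMap_lt hone hs' hs h'; omega
      set G := (starts I).image (sigmaMap I) with hG
      set FS : ℕ → ℕ := fun x => ∑ s ∈ (starts I).filter (fun s => sigmaMap I s = x), runLen I s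
        with hFS
      have key1 : ∀ s ∈ starts I, FS (sigmaMap I s) = runLen I s := by
        intro s hs
        have hsingle : (starts I).filter (fun t => sigmaMap I t = sigmaMap I s) = {s} := by
          ext t
          rw [Finset.mem_filter, Finset.mem_singleton]
          constructor
          · rintro ⟨ht, he⟩
            exact hinj t ht s hs he
          · rintro rfl
            exact ⟨hs, rfl⟩
        rw [hFS]
        simp only []
        rw [hsingle, Finset.sum_singleton]
      have hGsub : G ⊆ Finset.Icc 1 (n - m) := by
        intro x hx
        rw [hG, Finset.mem_image] at hx
        obtain ⟨s, hs, rfl⟩ := hx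
        rw [Finset.mem_Icc]
        exact ⟨sigmaMap_pos hone hs, sigmaMap_le hsub hcard hs⟩
      have hGcard : G.card = m - z := by
        rw [hG, Finset.card_image_of_injOn (fun a ha b hb => hinj a ha b hb), hstc]
      have hFSrange : ∀ x ∈ G, FS x ∈ Finset.Icc 1 (z+1) := by
        intro x hx
        rw [hG, Finset.mem_image] at hx
        obtain ⟨s, hs, rfl⟩ := hx
        rw [key1 s hs]
        exact hrmem s hs
      have hfibG : ∀ b, (G.filter fun a => FS a = b).card
          = ((starts I).filter (fun s => runLen I s = b)).card := by
        intro b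
        have hset : G.filter (fun a => FS a = b)
            = ((starts I).filter (fun s => runLen I s = b)).image (sigmaMap I) := by
          ext x
          simp only [hG, Finset.mem_filter, Finset.mem_image]
          constructor
          · rintro ⟨⟨s, hs, rfl⟩, hv⟩
            rw [key1 s hs] at hv
            exact ⟨s, ⟨hs, hv⟩, rfl⟩
          · rintro ⟨s, ⟨hs, hv⟩, rfl⟩
            exact ⟨⟨s, hs, rfl⟩, by rw [key1 s hs]; exact hv⟩
        rw [hset]
        apply Finset.card_image_of_injOn
        intro a ha b' hb'
        exact hinj a (Finset.mem_filter.1 ha).1 b' (Finset.mem_filter.1 hb').1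
      have hstart : ∀ s ∈ starts I, stPos G FS (sigmaMap I s) = s := by
        intro s hs
        have hfil : G.filter (· < sigmaMap I s)
            = ((starts I).filter (· < s)).image (sigmaMap I) := by
          ext y
          simp only [hG, Finset.mem_filter, Finset.mem_image]
          constructor
          · rintro ⟨⟨t, ht, rfl⟩, hlt⟩
            refine ⟨t, ⟨ht, ?_⟩, rfl⟩
            by_contra hc
            push_neg at hc
            rcases Nat.eq_or_lt_of_le hc with h | h
            · subst h; omega
            · have := sigmaMap_lt hone hs ht h; omega
          · rintro ⟨t, ⟨ht, hlt⟩, rfl⟩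
            exact ⟨⟨t, ht, rfl⟩, sigmaMap_lt hone ht hs hlt⟩
        have hsum : ∑ y ∈ G.filter (· < sigmaMap I s), FS y = preSum I s := by
          rw [hfil, Finset.sum_image (fun a ha b' hb' =>
            hinj a (Finset.mem_filter.1 ha).1 b' (Finset.mem_filter.1 hb').1)]
          rw [preSum]
          apply Finset.sum_congr rfl
          intro t ht
          exact key1 t (Finset.mem_filter.1 ht).1
        rw [stPos, hsum, sigmaMap]
        have := preSum_lt hone hs
        omega
      have hbuildI : build G FS = I := by
        ext i
        rw [mem_build_iff]
        constructor
        · rintro ⟨x, hx, h1, h2⟩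
          obtain ⟨s, hs, rfl⟩ := Finset.mem_image.1 hx
          rw [hstart s hs] at h1 h2
          rw [key1 s hs] at h2
          exact run_subset s (Finset.mem_Ico.2 ⟨h1, h2⟩)
        · intro hi
          obtain ⟨s, hs, h1, h2⟩ := exists_start h0 i hi
          refine ⟨sigmaMap I s, Finset.mem_image_of_mem _ hs, ?_⟩
          rw [hstart s hs, key1 s hs]
          exact ⟨h1, h2⟩
      refine ⟨⟨G, fun x _ => FS x⟩, ?_, ?_⟩
      · simp only [hPairsDef, Finset.mem_sigma, Finset.mem_powersetCard, Finset.mem_filter,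
          Finset.mem_pi]
        refine ⟨⟨hGsub, hGcard⟩, fun a ha => hFSrange a ha, ?_⟩
        intro b hb
        have htot : G.filter (fun a => totf G (fun x _ => FS x) a = b)
            = G.filter (fun a => FS a = b) := by
          apply Finset.filter_congr
          intro x hx
          rw [totf_mem hx]
        rw [htot, hfibG b, hstfib b hb]
      · have : ∀ y ∈ G, totf G (fun x _ => FS x) y = FS y := fun y hy => totf_mem hy
        rw [build_congr this, hbuildI]
  -- counting the pairs
  have hv1 : vfun 1 = m - z - ρ := by simp [hvfun]
  have hvsucc : ∀ j ∈ Finset.Icc 1 z, vfun (j + 1) = u j := by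
    intro j hj
    have := Finset.mem_Icc.1 hj
    rw [hvfun]
    simp only []
    rw [if_neg (by omega), Nat.add_sub_cancel]
  have hvsum : ∑ b ∈ Finset.Icc 1 (z+1), vfun b = m - z := by
    rw [Icc_shift_sum, hv1, Finset.sum_congr rfl hvsucc, ← hρ]
    omega
  have hvprod : ∏ b ∈ Finset.Icc 1 (z+1), (vfun b).factorial
      = (m - z - ρ).factorial * ∏ j ∈ Finset.Icc 1 z, (u j).factorial := by
    rw [Icc_shift_prod, hv1]
    congr 1
    apply Finset.prod_congr rfl
    intro j hj
    rw [hvsucc j hj]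
  have hper : ∀ G ∈ (Finset.Icc 1 (n - m)).powersetCard (m - z),
      ((G.pi fun _ => Finset.Icc 1 (z+1)).filter
        (fun f => ∀ b ∈ Finset.Icc 1 (z+1),
          (G.filter fun a => totf G f a = b).card = vfun b)).card
        * ((m - z - ρ).factorial * ∏ j ∈ Finset.Icc 1 z, (u j).factorial)
      = (m - z).factorial := by
    intro G hG
    rw [Finset.mem_powersetCard] at hG
    rw [← hvprod]
    have h := count_prescribed_fibers vfun (Finset.Icc 1 (z+1)) G (by rw [hvsum, hG.2])
    rw [hG.2] at h
    convert h using 3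
    congr!
  have hpc : ((Finset.Icc 1 (n - m)).powersetCard (m - z)).card = (n - m).choose (m - z) := by
    rw [Finset.card_powersetCard, Nat.card_Icc, Nat.add_sub_cancel]
  calc Iset.card * (∏ j ∈ Finset.Icc 1 z, (u j).factorial) * (m - z - ρ).factorial
      = Pairs.card * (∏ j ∈ Finset.Icc 1 z, (u j).factorial) * (m - z - ρ).factorial := by
        rw [hbij]
    _ = ∑ G ∈ (Finset.Icc 1 (n - m)).powersetCard (m - z),
        ((G.pi fun _ => Finset.Icc 1 (z+1)).filter
          (fun f => ∀ b ∈ Finset.Icc 1 (z+1),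
            (G.filter fun a => totf G f a = b).card = vfun b)).card
          * ((m - z - ρ).factorial * ∏ j ∈ Finset.Icc 1 z, (u j).factorial) := by
        rw [hPairsDef, Finset.card_sigma]
        rw [Finset.sum_mul, Finset.sum_mul]
        apply Finset.sum_congr rfl
        intro G _
        ring
    _ = ∑ G ∈ (Finset.Icc 1 (n - m)).powersetCard (m - z), (m - z).factorial := by
        exact Finset.sum_congr rfl hper
    _ = (m - z).factorial * Nat.choose (n - m) (m - z) := by
        rw [Finset.sum_const, smul_eq_mul, hpc, mul_comm]
end

section
/- Let Γ be a connected graph on vertex set V with a consistent height labelling ω (meaning every cycle has incline 0), and let n > d·|V|. Fix u ∈ V, set b₁ = -min over walks p from u of ω(p) and b₂ = max over walks p from u of ω(p). Then the number of families (h_v)_{v∈V} of integers in [n] satisfying h_x = h_y + ω(x,y) for every edge xy of Γ equals n - b₁ - b₂. -/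
/-- The incline of a walk: the sum of `ω` along its edges. -/
def incline {V : Type*} (G : SimpleGraph V) (ω : V → V → ℤ) :
    {u v : V} → G.Walk u v → ℤ
  | _, _, SimpleGraph.Walk.nil => 0
  | u, _, SimpleGraph.Walk.cons (v := x) _ p => ω u x + incline G ω p

/-- For a connected graph `Γ` with a consistent height labelling `ω` (every cycle has
incline `0`), `n > d·|V|`, a fixed vertex `u`, `b₁ = -min_p ω(p)` and `b₂ = max_p ω(p)`
over walks `p` from `u`, the number of families `(h_v) ∈ [n]^V` with `h_x = h_y + ω(x,y)`
on every edge is `n - b₁ - b₂`. -/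
theorem count_consistent_heights (V : Type*) [Fintype V] (d n : ℕ)
    (G : SimpleGraph V) (hconn : G.Connected)
    (ω : V → V → ℤ)
    (hanti : ∀ x y, ω x y = -ω y x)
    (hbd : ∀ x y, G.Adj x y → |ω x y| ≤ (d : ℤ))
    (hcons : ∀ (v : V) (p : G.Walk v v), p.IsCycle → incline G ω p = 0)
    (hn : d * Fintype.card V < n)
    (u : V) (b₁ b₂ : ℤ)
    (hb1 : ∀ (v : V) (p : G.Walk u v), -b₁ ≤ incline G ω p)
    (hb1' : ∃ (v : V) (p : G.Walk u v), incline G ω p = -b₁)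
    (hb2 : ∀ (v : V) (p : G.Walk u v), incline G ω p ≤ b₂)
    (hb2' : ∃ (v : V) (p : G.Walk u v), incline G ω p = b₂) :
    ({h : V → ℤ | (∀ v, h v ∈ Set.Icc 1 (n : ℤ)) ∧
        ∀ x y, G.Adj x y → h x = h y + ω x y}.ncard : ℤ) = n - b₁ - b₂ := by
  classical
  have incline_append : ∀ {a b c : V} (p : G.Walk a b) (q : G.Walk b c),
      incline G ω (p.append q) = incline G ω p + incline G ω q := by
    intro a b c p q
    induction p with
    | nil => simp [incline]
    | cons h p ih => simp [incline, ih]; ring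
  have incline_reverse : ∀ {a b : V} (p : G.Walk a b),
      incline G ω p.reverse = - incline G ω p := by
    intro a b p
    induction p with
    | nil => simp [incline]
    | cons h p ih =>
      rw [SimpleGraph.Walk.reverse_cons, incline_append, ih]
      simp [incline]
      exact hanti _ _
  -- closed walks at u have incline zero
  have closed_zero : ∀ (c : G.Walk u u), incline G ω c = 0 := by
    have key : ∀ (c : G.Walk u u), 0 < incline G ω c → False := by
      intro c hc
      have iter : ∀ k : ℕ, ∃ w : G.Walk u u, incline G ω w = k * incline G ω c := by
        intro k; induction k with
        | zero => exact ⟨.nil, by simp [incline]⟩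
        | succ k ih =>
          obtain ⟨w, hw⟩ := ih
          exact ⟨w.append c, by rw [incline_append, hw]; push_cast; ring⟩
      obtain ⟨w, hw⟩ := iter (b₂ + 1).toNat
      have h2 := hb2 u w
      have hb2nn : 0 ≤ b₂ := by simpa [incline] using hb2 u .nil
      have hk : ((b₂ + 1).toNat : ℤ) = b₂ + 1 := Int.toNat_of_nonneg (by linarith)
      rw [hw, hk] at h2
      nlinarith
    intro c
    by_contra hne
    rcases lt_or_gt_of_ne hne with h | h
    · exact key c.reverse (by rw [incline_reverse]; linarith)
    · exact key c h
  -- path independence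
  have indep_u : ∀ {v : V} (p q : G.Walk u v), incline G ω p = incline G ω q := by
    intro v p q
    have := closed_zero (p.append q.reverse)
    rw [incline_append, incline_reverse] at this
    linarith
  have walk_ex : ∀ v : V, Nonempty (G.Walk u v) := fun v => hconn.preconnected u v
  have indep : ∀ {a b : V} (p q : G.Walk a b), incline G ω p = incline G ω q := by
    intro a b p q
    obtain ⟨r⟩ := walk_ex a
    have := indep_u (r.append p) (r.append q)
    rw [incline_append, incline_append] at this
    linarith
  set f : V → ℤ := fun v => incline G ω (walk_ex v).some with hf
  have hfval : ∀ (v : V) (p : G.Walk u v), f v = incline G ω p := fun v p => indep _ _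
  have hfu : f u = 0 := by simpa [incline] using hfval u .nil
  have hf_edge : ∀ x y, G.Adj x y → f y = f x + ω x y := by
    intro x y hxy
    rw [hfval y ((walk_ex x).some.append (.cons hxy .nil)), incline_append]
    simp [incline, hf]
  have hfb1 : ∀ v, -b₁ ≤ f v := fun v => hb1 v _
  have hfb2 : ∀ v, f v ≤ b₂ := fun v => hb2 v _
  obtain ⟨v₁, p₁, hp₁⟩ := hb1'
  obtain ⟨v₂, p₂, hp₂⟩ := hb2'
  have hfv₁ : f v₁ = -b₁ := by rw [hfval v₁ p₁, hp₁]
  have hfv₂ : f v₂ = b₂ := by rw [hfval v₂ p₂, hp₂]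
  -- bound on b₁ + b₂
  have incline_abs : ∀ {a b : V} (p : G.Walk a b), |incline G ω p| ≤ (d : ℤ) * p.length := by
    intro a b p
    induction p with
    | nil => simp [incline]
    | @cons a x b h p ih =>
      have h1 := hbd _ _ h
      have habs := abs_add_le (ω a x) (incline G ω p)
      simp only [incline, SimpleGraph.Walk.length_cons]
      push_cast
      nlinarith [abs_nonneg (incline G ω p)]
  have hbound : b₁ + b₂ ≤ (d : ℤ) * Fintype.card V := by
    obtain ⟨r₁⟩ := walk_ex v₁
    obtain ⟨r₂⟩ := walk_ex v₂
    set q : G.Walk v₁ v₂ := r₁.reverse.append r₂ with hq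
    have h1 : incline G ω q.bypass = b₁ + b₂ := by
      rw [indep q.bypass q, hq, incline_append, incline_reverse,
        ← hfval v₁ r₁, ← hfval v₂ r₂, hfv₁, hfv₂]
      ring
    have h2 := incline_abs q.bypass
    have h3 : q.bypass.length < Fintype.card V := q.bypass_isPath.length_lt
    have h4 : (d:ℤ) * q.bypass.length ≤ (d:ℤ) * Fintype.card V := by
      have : (q.bypass.length : ℤ) ≤ Fintype.card V := by exact_mod_cast h3.le
      exact mul_le_mul_of_nonneg_left this (by positivity)
    calc b₁ + b₂ = incline G ω q.bypass := h1.symm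
      _ ≤ |incline G ω q.bypass| := le_abs_self _
      _ ≤ (d:ℤ) * q.bypass.length := h2
      _ ≤ _ := h4
  have hnn : 0 ≤ (n : ℤ) - b₁ - b₂ := by
    have : (d * Fintype.card V : ℤ) < n := by exact_mod_cast hn
    push_cast at this ⊢
    linarith
  -- the solution set
  have hSeq : {h : V → ℤ | (∀ v, h v ∈ Set.Icc 1 (n : ℤ)) ∧
        ∀ x y, G.Adj x y → h x = h y + ω x y}
      = (fun c : ℤ => fun v => c - f v) '' Set.Icc (1 + b₂) ((n:ℤ) - b₁) := by
    ext h
    simp only [Set.mem_setOf_eq, Set.mem_image, Set.mem_Icc]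
    constructor
    · rintro ⟨hrange, hedge⟩
      have hwalk : ∀ {a b : V} (p : G.Walk a b), h a = h b + incline G ω p := by
        intro a b p
        induction p with
        | nil => simp [incline]
        | cons hadj p ih =>
          rw [incline]
          rw [hedge _ _ hadj, ih]
          ring
      have hval : ∀ v, h v = h u - f v := by
        intro v
        have h1 := hwalk (walk_ex v).some
        have h2 : f v = incline G ω (walk_ex v).some := rfl
        linarith
      refine ⟨h u, ⟨?_, ?_⟩, ?_⟩
      · have := (hrange v₂).1
        rw [hval v₂, hfv₂] at this
        linarith
      · have := (hrange v₁).2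
        rw [hval v₁, hfv₁] at this
        linarith
      · funext v; rw [hval v]
    · rintro ⟨c, ⟨hc1, hc2⟩, rfl⟩
      refine ⟨fun v => ⟨?_, ?_⟩, ?_⟩
      · show 1 ≤ c - f v
        have := hfb2 v; linarith
      · show c - f v ≤ (n:ℤ)
        have := hfb1 v; linarith
      · intro x y hxy
        show c - f x = c - f y + ω x y
        rw [hf_edge x y hxy]
        ring
  rw [hSeq, Set.ncard_image_of_injective _ (fun c c' hcc => by
    have := congrFun hcc u
    simpa [hfu] using this)]
  rw [← Finset.coe_Icc, Set.ncard_coe_finset, Int.card_Icc]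
  have : ((n:ℤ) - b₁ + 1 - (1 + b₂)) = (n:ℤ) - b₁ - b₂ := by ring
  rw [this, Int.toNat_of_nonneg hnn]
end
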